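/- arXiv:2303.15529 — 2 statements merged into one kernel-verified Lean document; each statement's English description precedes it below -/
import Mathlib

section
/- For all positive integers k and t, the even subdivision T_{2k}(K_{t,t}) of the complete bipartite graph K_{t,t} is layered. -/
open SimpleGraph

/-- The hypercube graph `Q_n`. -/
def hypercube (n : ℕ) : SimpleGraph (Finset (Fin n)) where
  Adj A B := (A ⊆ B ∧ B.card = A.card + 1) ∨ (B ⊆ A ∧ A.card = B.card + 1)
  symm := ⟨fun A B h => h.symm⟩
  loopless := by
    refine ⟨fun A h => ?_⟩
    rcases h with ⟨-, h⟩ | ⟨-, h⟩ <;> omega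

/-- A graph is layered if it is isomorphic to a subgraph of an edge layer of a hypercube. -/
def IsLayered {V : Type*} (G : SimpleGraph V) : Prop :=
  ∃ (n k : ℕ) (f : V → Finset (Fin n)), Function.Injective f ∧
    (∀ v, (f v).card = k ∨ (f v).card + 1 = k) ∧
    ∀ u v, G.Adj u v → (hypercube n).Adj (f u) (f v)

/-- The \`m\`-subdivision \`T_m(K_{t,t})\` of the complete bipartite graph \`K_{t,t}\`: each
edge \`(i,j)\` is replaced by a path \`i, ((i,j),0), …, ((i,j),m-1), j\` with \`m\` new internal
vertices. -/
def subdividedCompleteBipartite (t m : ℕ) :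
    SimpleGraph ((Fin t ⊕ Fin t) ⊕ ((Fin t × Fin t) × Fin m)) :=
  SimpleGraph.fromRel (fun x y =>
    match x, y with
    | Sum.inl (Sum.inl u), Sum.inr (e, l) => u = e.1 ∧ l.val = 0
    | Sum.inl (Sum.inr v), Sum.inr (e, l) => v = e.2 ∧ l.val = m - 1
    | Sum.inr (e, l), Sum.inr (e', l') => e = e' ∧ l.val + 1 = l'.val
    | _, _ => False)

namespace EvenSubdivAux

open Finset

/-- The ground type for the embedding: core elements `z i`, left elements `a (i,r)`,
right elements `b (j,s)`. -/
abbrev Vp (t k : ℕ) := Fin t ⊕ ((Fin t × Fin k) ⊕ (Fin t × Fin k))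

variable {t k : ℕ}

def embZ : Fin t ↪ Vp t k := ⟨Sum.inl, Sum.inl_injective⟩
def embA : (Fin t × Fin k) ↪ Vp t k :=
  ⟨fun p => Sum.inr (Sum.inl p), fun a b h => by simpa using h⟩
def embB : (Fin t × Fin k) ↪ Vp t k :=
  ⟨fun p => Sum.inr (Sum.inr p), fun a b h => by simpa using h⟩

/-- The embedding into the hypercube (before relabeling the ground set by `Fin n`). -/
def F : (Fin t ⊕ Fin t) ⊕ ((Fin t × Fin t) × Fin (2 * k)) → Finset (Vp t k)
  | Sum.inl (Sum.inl i) =>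
      ((univ.erase i).map embZ ∪ ({i} ×ˢ univ).map embA) ∪ (∅ : Finset (Fin t × Fin k)).map embB
  | Sum.inl (Sum.inr j) =>
      (univ.map embZ ∪ (∅ : Finset (Fin t × Fin k)).map embA) ∪ ({j} ×ˢ univ).map embB
  | Sum.inr ((i, j), l) =>
      ((univ.erase i).map embZ ∪ ({i} ×ˢ (univ.filter fun r => l.val ≤ 2 * r.val)).map embA)
        ∪ ({j} ×ˢ (univ.filter fun s => 2 * s.val ≤ l.val)).map embB

/- Membership characterizations. -/

@[simp] lemma memZ_ul (w i : Fin t) :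
    (Sum.inl w : Vp t k) ∈ F (k := k) (Sum.inl (Sum.inl i)) ↔ w ≠ i := by
  simp [F, embZ, embA, embB, eq_comm, and_comm]

@[simp] lemma memA_ul (w : Fin t) (r : Fin k) (i : Fin t) :
    (Sum.inr (Sum.inl (w, r)) : Vp t k) ∈ F (k := k) (Sum.inl (Sum.inl i)) ↔ w = i := by
  simp [F, embZ, embA, embB, eq_comm, and_comm, DFunLike.coe]

@[simp] lemma memB_ul (w : Fin t) (s : Fin k) (i : Fin t) :
    (Sum.inr (Sum.inr (w, s)) : Vp t k) ∈ F (k := k) (Sum.inl (Sum.inl i)) ↔ False := by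
  simp [F, embZ, embA, embB, eq_comm, and_comm, DFunLike.coe]

@[simp] lemma memZ_ur (w j : Fin t) :
    (Sum.inl w : Vp t k) ∈ F (k := k) (Sum.inl (Sum.inr j)) ↔ True := by
  simp [F, embZ, embA, embB, eq_comm, and_comm]

@[simp] lemma memA_ur (w : Fin t) (r : Fin k) (j : Fin t) :
    (Sum.inr (Sum.inl (w, r)) : Vp t k) ∈ F (k := k) (Sum.inl (Sum.inr j)) ↔ False := by
  simp [F, embZ, embA, embB, eq_comm, and_comm, DFunLike.coe]

@[simp] lemma memB_ur (w : Fin t) (s : Fin k) (j : Fin t) :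
    (Sum.inr (Sum.inr (w, s)) : Vp t k) ∈ F (k := k) (Sum.inl (Sum.inr j)) ↔ w = j := by
  simp [F, embZ, embA, embB, eq_comm, and_comm, DFunLike.coe]

@[simp] lemma memZ_int (w i j : Fin t) (l : Fin (2 * k)) :
    (Sum.inl w : Vp t k) ∈ F (k := k) (Sum.inr ((i, j), l)) ↔ w ≠ i := by
  simp [F, embZ, embA, embB, eq_comm, and_comm]

@[simp] lemma memA_int (w : Fin t) (r : Fin k) (i j : Fin t) (l : Fin (2 * k)) :
    (Sum.inr (Sum.inl (w, r)) : Vp t k) ∈ F (k := k) (Sum.inr ((i, j), l)) ↔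
      w = i ∧ l.val ≤ 2 * r.val := by
  simp [F, embZ, embA, embB, eq_comm, and_comm, DFunLike.coe]

@[simp] lemma memB_int (w : Fin t) (s : Fin k) (i j : Fin t) (l : Fin (2 * k)) :
    (Sum.inr (Sum.inr (w, s)) : Vp t k) ∈ F (k := k) (Sum.inr ((i, j), l)) ↔
      w = j ∧ 2 * s.val ≤ l.val := by
  simp [F, embZ, embA, embB, eq_comm, and_comm, DFunLike.coe]

/- Cardinality computations. -/

lemma card_filter_fin (k : ℕ) (P : ℕ → Prop) [DecidablePred P] :
    ((univ : Finset (Fin k)).filter fun r => P r.val).card = ((range k).filter P).card := by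
  rw [← Finset.card_map ⟨Fin.val, Fin.val_injective⟩]
  congr 1
  ext n
  simp only [Finset.mem_map, Finset.mem_filter, Finset.mem_univ, true_and,
    Function.Embedding.coeFn_mk, Finset.mem_range]
  constructor
  · rintro ⟨a, hP, rfl⟩; exact ⟨a.isLt, hP⟩
  · rintro ⟨hn, hP⟩; exact ⟨⟨n, hn⟩, hP, rfl⟩

lemma cardA_filter (c : ℕ) :
    ((univ : Finset (Fin k)).filter fun r => c ≤ 2 * r.val).card = k - (c + 1) / 2 := by
  rw [card_filter_fin k (fun n => c ≤ 2 * n)]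
  have : (range k).filter (fun r => c ≤ 2 * r) = Ico ((c + 1) / 2) k := by
    ext n; simp only [Finset.mem_filter, Finset.mem_range, Finset.mem_Ico]; omega
  rw [this, Nat.card_Ico]

lemma cardB_filter (c : ℕ) (hc : c < 2 * k) :
    ((univ : Finset (Fin k)).filter fun s => 2 * s.val ≤ c).card = c / 2 + 1 := by
  rw [card_filter_fin k (fun n => 2 * n ≤ c)]
  have : (range k).filter (fun s => 2 * s ≤ c) = range (c / 2 + 1) := by
    ext n; simp only [Finset.mem_filter, Finset.mem_range]; omega
  rw [this, Finset.card_range]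

lemma disjZA (s : Finset (Fin t)) (u : Finset (Fin t × Fin k)) :
    Disjoint (s.map embZ) (u.map embA) := by
  rw [Finset.disjoint_left]
  rintro x hx hy
  simp only [Finset.mem_map, embZ, embA, Function.Embedding.coeFn_mk] at hx hy
  obtain ⟨a, -, rfl⟩ := hx
  obtain ⟨b, -, hb⟩ := hy
  simp at hb

lemma disjZAB (s : Finset (Fin t)) (u v : Finset (Fin t × Fin k)) :
    Disjoint (s.map embZ ∪ u.map embA) (v.map embB) := by
  rw [Finset.disjoint_left]
  rintro x hx hy
  simp only [Finset.mem_map, Finset.mem_union, embZ, embA, embB,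
    Function.Embedding.coeFn_mk] at hx hy
  obtain ⟨b, -, hb⟩ := hy
  rcases hx with ⟨a, -, rfl⟩ | ⟨a, -, rfl⟩ <;> simp [DFunLike.coe] at hb

lemma card_F_parts (s : Finset (Fin t)) (u v : Finset (Fin t × Fin k)) :
    ((s.map embZ ∪ u.map embA) ∪ v.map embB).card = s.card + u.card + v.card := by
  rw [Finset.card_union_of_disjoint (disjZAB s u v),
    Finset.card_union_of_disjoint (disjZA s u), Finset.card_map, Finset.card_map,
    Finset.card_map]

lemma card_F_ul (i : Fin t) :
    (F (k := k) (Sum.inl (Sum.inl i))).card = t - 1 + k := by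
  simp only [F]
  rw [card_F_parts]
  simp [Finset.card_erase_of_mem, Finset.card_product]

lemma card_F_ur (j : Fin t) :
    (F (k := k) (Sum.inl (Sum.inr j))).card = t + k := by
  simp only [F]
  rw [card_F_parts]
  simp [Finset.card_product]

lemma card_F_int (i j : Fin t) (l : Fin (2 * k)) :
    (F (k := k) (Sum.inr ((i, j), l))).card =
      (t - 1) + (k - (l.val + 1) / 2) + (l.val / 2 + 1) := by
  simp only [F]
  rw [card_F_parts]
  rw [Finset.singleton_product, Finset.card_map, Finset.singleton_product, Finset.card_map]
  rw [cardA_filter, cardB_filter _ l.isLt]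
  simp [Finset.card_erase_of_mem]

lemma F_injective (hk : 1 ≤ k) :
    Function.Injective (F : _ → Finset (Vp t k)) := by
  have k0 : (0 : ℕ) < k := hk
  intro u v h
  have hx : ∀ x, x ∈ F (k := k) u ↔ x ∈ F (k := k) v := fun x => by rw [h]
  rcases u with (i | j) | ⟨⟨i, j⟩, l⟩ <;> rcases v with (i' | j') | ⟨⟨i', j'⟩, l'⟩
  · have := hx (Sum.inl i); simp at this
    subst this; rfl
  · have := hx (Sum.inl i); simp at this
  · have := hx (Sum.inr (Sum.inr (j', ⟨0, k0⟩))); simp at this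
  · have := hx (Sum.inl i'); simp at this
  · have := hx (Sum.inr (Sum.inr (j, ⟨0, k0⟩))); simp at this
    subst this; rfl
  · have := hx (Sum.inl i'); simp at this
  · have := hx (Sum.inr (Sum.inr (j, ⟨0, k0⟩))); simp at this
  · have := hx (Sum.inl i); simp at this
  · have hz := hx (Sum.inl i)
    simp at hz
    have hb0 := hx (Sum.inr (Sum.inr (j, ⟨0, k0⟩)))
    simp at hb0
    subst hz
    subst hb0
    have hl2 : l.val / 2 < k := by omega
    have hl'2 : l'.val / 2 < k := by omega
    have h1 := hx (Sum.inr (Sum.inr (j, ⟨l.val / 2, hl2⟩)))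
    have h2 := hx (Sum.inr (Sum.inr (j, ⟨l'.val / 2, hl'2⟩)))
    have h3 := hx (Sum.inr (Sum.inl (i, ⟨l.val / 2, hl2⟩)))
    have h4 := hx (Sum.inr (Sum.inl (i, ⟨l'.val / 2, hl'2⟩)))
    simp at h1 h2 h3 h4
    have : l = l' := by
      apply Fin.ext
      omega
    subst this; rfl

lemma subset_ul_int (i j : Fin t) (l : Fin (2 * k)) (hl : l.val = 0) :
    F (k := k) (Sum.inl (Sum.inl i)) ⊆ F (Sum.inr ((i, j), l)) := by
  intro x hx
  rcases x with w | (⟨w, r⟩ | ⟨w, s⟩) <;> simp_all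

lemma subset_int_ur (i j : Fin t) (l : Fin (2 * k)) (hl : l.val = 2 * k - 1)
    (hk : 1 ≤ k) : F (k := k) (Sum.inr ((i, j), l)) ⊆ F (Sum.inl (Sum.inr j)) := by
  intro x hx
  rcases x with w | (⟨w, r⟩ | ⟨w, s⟩) <;> simp_all
  have := r.isLt
  omega

lemma subset_int_step (i j : Fin t) (l l' : Fin (2 * k)) (h : l.val + 1 = l'.val)
    (hp : l.val % 2 = 1) :
    F (k := k) (Sum.inr ((i, j), l)) ⊆ F (Sum.inr ((i, j), l')) := by
  intro x hx
  rcases x with w | (⟨w, r⟩ | ⟨w, s⟩) <;> simp_all <;> omega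

lemma subset_int_step' (i j : Fin t) (l l' : Fin (2 * k)) (h : l.val + 1 = l'.val)
    (hp : l.val % 2 = 0) :
    F (k := k) (Sum.inr ((i, j), l')) ⊆ F (Sum.inr ((i, j), l)) := by
  intro x hx
  rcases x with w | (⟨w, r⟩ | ⟨w, s⟩) <;> simp_all <;> omega

end EvenSubdivAux

/-- For all positive integers `k` and `t`, the even subdivision `T_{2k}(K_{t,t})` is
layered. -/
theorem even_subdivision_complete_bipartite_layered (k t : ℕ) (hk : 1 ≤ k) (ht : 1 ≤ t) :
    IsLayered (subdividedCompleteBipartite t (2 * k)) := by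
  classical
  open EvenSubdivAux in
  refine ⟨Fintype.card (Vp t k), t + k,
    fun v => (F (k := k) v).map (Fintype.equivFin (Vp t k)).toEmbedding, ?_, ?_, ?_⟩
  · exact fun u v h => F_injective hk (Finset.map_injective _ h)
  · intro v
    rw [Finset.card_map]
    rcases v with (i | j) | ⟨⟨i, j⟩, l⟩
    · rw [card_F_ul]; omega
    · rw [card_F_ur]; omega
    · rw [card_F_int]; have := l.isLt; omega
  · intro u v huv
    simp only [subdividedCompleteBipartite, SimpleGraph.fromRel_adj] at huv
    obtain ⟨-, hrel⟩ := huv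
    have hadj : ∀ a b, F (k := k) a ⊆ F (k := k) b →
        (F (k := k) b).card = (F (k := k) a).card + 1 →
        (hypercube (Fintype.card (Vp t k))).Adj
          ((F (k := k) a).map (Fintype.equivFin (Vp t k)).toEmbedding)
          ((F (k := k) b).map (Fintype.equivFin (Vp t k)).toEmbedding) := by
      intro a b hs hc
      exact Or.inl (a := _ ∧ _) ⟨Finset.map_subset_map.mpr hs, by rw [Finset.card_map, Finset.card_map, hc]⟩
    rcases u with (i | j) | ⟨⟨i, j⟩, l⟩ <;> rcases v with (i' | j') | ⟨⟨i', j'⟩, l'⟩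
    · rcases hrel with h | h <;> exact h.elim
    · rcases hrel with h | h <;> exact h.elim
    · rcases hrel with ⟨rfl, hl⟩ | h
      · exact hadj _ _ (subset_ul_int i j' l' hl)
          (by rw [card_F_int, card_F_ul]; omega)
      · exact h.elim
    · rcases hrel with h | h <;> exact h.elim
    · rcases hrel with h | h <;> exact h.elim
    · rcases hrel with ⟨rfl, hl⟩ | h
      · exact (hadj _ _ (subset_int_ur i' j l' hl hk)
          (by rw [card_F_int, card_F_ur]; have := l'.isLt; omega)).symm
      · exact h.elim
    · rcases hrel with h | ⟨rfl, hl⟩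
      · exact h.elim
      · exact (hadj _ _ (subset_ul_int i' j l hl)
          (by rw [card_F_int, card_F_ul]; omega)).symm
    · rcases hrel with h | ⟨rfl, hl⟩
      · exact h.elim
      · exact hadj _ _ (subset_int_ur i j' l hl hk)
          (by rw [card_F_int, card_F_ur]; have := l.isLt; omega)
    · rcases hrel with ⟨he, hstep⟩ | ⟨he, hstep⟩
      · obtain ⟨rfl, rfl⟩ := Prod.mk.inj he
        by_cases hp : l.val % 2 = 0
        · exact (hadj _ _ (subset_int_step' _ _ l l' hstep hp)
            (by rw [card_F_int, card_F_int]; have := l'.isLt; omega)).symm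
        · exact hadj _ _ (subset_int_step _ _ l l' hstep (by omega))
            (by rw [card_F_int, card_F_int]; have := l'.isLt; omega)
      · obtain ⟨rfl, rfl⟩ := Prod.mk.inj he
        by_cases hp : l'.val % 2 = 0
        · exact hadj _ _ (subset_int_step' _ _ l' l hstep hp)
            (by rw [card_F_int, card_F_int]; have := l.isLt; omega)
        · exact (hadj _ _ (subset_int_step _ _ l' l hstep (by omega))
            (by rw [card_F_int, card_F_int]; have := l.isLt; omega)).symm
end

section
/- ex*(Q_3, C_6^-) = 8; that is, the largest number of edges of a subgraph of the 3-dimensional hypercube Q_3 containing no C_6^- equals 8. -/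
open SimpleGraph

/-- The number of edges of a graph. -/
noncomputable def numEdges {V : Type*} (G : SimpleGraph V) : ℕ := Nat.card G.edgeSet

/-- \`G\` contains a \`C₆⁻\`: a subgraph with 6 vertices and 5 edges that is a subgraph of a
6-cycle of \`Q_n\` (a 6-cycle of the hypercube with one edge removed). -/
def ContainsC6Minus (n : ℕ) (G : SimpleGraph (Finset (Fin n))) : Prop :=
  ∃ f : Fin 6 → Finset (Fin n), Function.Injective f ∧
    (∀ j : Fin 6, (hypercube n).Adj (f j) (f (j + 1))) ∧
    ∃ i : Fin 6, ∀ j : Fin 6, j ≠ i → G.Adj (f j) (f (j + 1))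

instance hypDec (n : ℕ) : DecidableRel (hypercube n).Adj := fun A B =>
  inferInstanceAs (Decidable ((A ⊆ B ∧ B.card = A.card + 1) ∨ (B ⊆ A ∧ A.card = B.card + 1)))

/-- The 16 six-cycles of `Q_3`. -/
def cyc : Fin 16 → Fin 6 → Finset (Fin 3) := ![
  ![(∅:Finset (Fin 3)), ({0} : Finset (Fin 3)), ({0,1} : Finset (Fin 3)), ({0,1,2} : Finset (Fin 3)), ({0,2} : Finset (Fin 3)), ({2} : Finset (Fin 3))],
  ![(∅:Finset (Fin 3)), ({0} : Finset (Fin 3)), ({0,1} : Finset (Fin 3)), ({0,1,2} : Finset (Fin 3)), ({1,2} : Finset (Fin 3)), ({1} : Finset (Fin 3))],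
  ![(∅:Finset (Fin 3)), ({0} : Finset (Fin 3)), ({0,1} : Finset (Fin 3)), ({0,1,2} : Finset (Fin 3)), ({1,2} : Finset (Fin 3)), ({2} : Finset (Fin 3))],
  ![(∅:Finset (Fin 3)), ({0} : Finset (Fin 3)), ({0,1} : Finset (Fin 3)), ({1} : Finset (Fin 3)), ({1,2} : Finset (Fin 3)), ({2} : Finset (Fin 3))],
  ![(∅:Finset (Fin 3)), ({0} : Finset (Fin 3)), ({0,2} : Finset (Fin 3)), ({0,1,2} : Finset (Fin 3)), ({0,1} : Finset (Fin 3)), ({1} : Finset (Fin 3))],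
  ![(∅:Finset (Fin 3)), ({0} : Finset (Fin 3)), ({0,2} : Finset (Fin 3)), ({0,1,2} : Finset (Fin 3)), ({1,2} : Finset (Fin 3)), ({1} : Finset (Fin 3))],
  ![(∅:Finset (Fin 3)), ({0} : Finset (Fin 3)), ({0,2} : Finset (Fin 3)), ({0,1,2} : Finset (Fin 3)), ({1,2} : Finset (Fin 3)), ({2} : Finset (Fin 3))],
  ![(∅:Finset (Fin 3)), ({0} : Finset (Fin 3)), ({0,2} : Finset (Fin 3)), ({2} : Finset (Fin 3)), ({1,2} : Finset (Fin 3)), ({1} : Finset (Fin 3))],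
  ![(∅:Finset (Fin 3)), ({1} : Finset (Fin 3)), ({0,1} : Finset (Fin 3)), ({0} : Finset (Fin 3)), ({0,2} : Finset (Fin 3)), ({2} : Finset (Fin 3))],
  ![(∅:Finset (Fin 3)), ({1} : Finset (Fin 3)), ({0,1} : Finset (Fin 3)), ({0,1,2} : Finset (Fin 3)), ({0,2} : Finset (Fin 3)), ({2} : Finset (Fin 3))],
  ![(∅:Finset (Fin 3)), ({1} : Finset (Fin 3)), ({0,1} : Finset (Fin 3)), ({0,1,2} : Finset (Fin 3)), ({1,2} : Finset (Fin 3)), ({2} : Finset (Fin 3))],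
  ![(∅:Finset (Fin 3)), ({1} : Finset (Fin 3)), ({1,2} : Finset (Fin 3)), ({0,1,2} : Finset (Fin 3)), ({0,2} : Finset (Fin 3)), ({2} : Finset (Fin 3))],
  ![({0} : Finset (Fin 3)), ({0,1} : Finset (Fin 3)), ({0,1,2} : Finset (Fin 3)), ({1,2} : Finset (Fin 3)), ({2} : Finset (Fin 3)), ({0,2} : Finset (Fin 3))],
  ![({0} : Finset (Fin 3)), ({0,1} : Finset (Fin 3)), ({1} : Finset (Fin 3)), ({1,2} : Finset (Fin 3)), ({0,1,2} : Finset (Fin 3)), ({0,2} : Finset (Fin 3))],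
  ![({0} : Finset (Fin 3)), ({0,1} : Finset (Fin 3)), ({1} : Finset (Fin 3)), ({1,2} : Finset (Fin 3)), ({2} : Finset (Fin 3)), ({0,2} : Finset (Fin 3))],
  ![({0,1} : Finset (Fin 3)), ({0,1,2} : Finset (Fin 3)), ({0,2} : Finset (Fin 3)), ({2} : Finset (Fin 3)), ({1,2} : Finset (Fin 3)), ({1} : Finset (Fin 3))]]

set_option maxRecDepth 100000
set_option maxHeartbeats 4000000
set_option synthInstance.maxSize 10000
set_option synthInstance.maxHeartbeats 1000000

lemma cyc_inj : ∀ k : Fin 16, Function.Injective (cyc k) := by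
  have : ∀ k : Fin 16, ∀ j₁ j₂ : Fin 6, cyc k j₁ = cyc k j₂ → j₁ = j₂ := by decide
  exact fun k j₁ j₂ h => this k j₁ j₂ h

lemma cyc_adj : ∀ (k : Fin 16) (j : Fin 6), (hypercube 3).Adj (cyc k j) (cyc k (j + 1)) := by
  decide

/-- The 12 edges of `Q_3`. -/
def ed : Fin 12 → Sym2 (Finset (Fin 3)) := ![
  s((∅ : Finset (Fin 3)), ({0} : Finset (Fin 3))),
  s((∅ : Finset (Fin 3)), ({1} : Finset (Fin 3))),
  s((∅ : Finset (Fin 3)), ({2} : Finset (Fin 3))),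
  s(({0} : Finset (Fin 3)), ({0,1} : Finset (Fin 3))),
  s(({0} : Finset (Fin 3)), ({0,2} : Finset (Fin 3))),
  s(({0,1} : Finset (Fin 3)), ({0,1,2} : Finset (Fin 3))),
  s(({0,1} : Finset (Fin 3)), ({1} : Finset (Fin 3))),
  s(({0,1,2} : Finset (Fin 3)), ({0,2} : Finset (Fin 3))),
  s(({0,1,2} : Finset (Fin 3)), ({1,2} : Finset (Fin 3))),
  s(({0,2} : Finset (Fin 3)), ({2} : Finset (Fin 3))),
  s(({1} : Finset (Fin 3)), ({1,2} : Finset (Fin 3))),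
  s(({1,2} : Finset (Fin 3)), ({2} : Finset (Fin 3)))]

/-- The edge indices of each of the 16 six-cycles. -/
def cyce : Fin 16 → Fin 6 → Fin 12 := ![
  ![0,3,5,7,9,2],
  ![0,3,5,8,10,1],
  ![0,3,5,8,11,2],
  ![0,3,6,10,11,2],
  ![0,4,7,5,6,1],
  ![0,4,7,8,10,1],
  ![0,4,7,8,11,2],
  ![0,4,9,11,10,1],
  ![1,6,3,4,9,2],
  ![1,6,5,7,9,2],
  ![1,6,5,8,11,2],
  ![1,10,8,7,9,2],
  ![3,5,8,11,9,4],
  ![3,6,10,8,7,4],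
  ![3,6,10,11,9,4],
  ![5,7,9,11,10,6]]

lemma ed_cyce : ∀ (k : Fin 16) (j : Fin 6), ed (cyce k j) = s(cyc k j, cyc k (j + 1)) := by
  decide

lemma ed_inj : Function.Injective ed := by
  have : ∀ t₁ t₂ : Fin 12, ed t₁ = ed t₂ → t₁ = t₂ := by decide
  exact fun t₁ t₂ h => this t₁ t₂ h

lemma ed_surj : ∀ e ∈ (hypercube 3).edgeFinset, ∃ t : Fin 12, ed t = e := by decide

lemma master : ∀ t₁ t₂ t₃ : Fin 12, ∃ k : Fin 16, ∃ i : Fin 6,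
    ∀ j : Fin 6, j ≠ i → cyce k j ≠ t₁ ∧ cyce k j ≠ t₂ ∧ cyce k j ≠ t₃ := by decide

/-- explicit witness form of a `C₆⁻` in a relation `R` -/
def C6w (R : Finset (Fin 3) → Finset (Fin 3) → Prop) : Prop :=
  ∃ a b : Finset (Fin 3), (hypercube 3).Adj a b ∧ ∃ c, (hypercube 3).Adj b c ∧ a ≠ c ∧
   ∃ d, (hypercube 3).Adj c d ∧ a ≠ d ∧ b ≠ d ∧
    ∃ e, (hypercube 3).Adj d e ∧ a ≠ e ∧ b ≠ e ∧ c ≠ e ∧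
    ∃ g, (hypercube 3).Adj e g ∧ (hypercube 3).Adj g a ∧ b ≠ g ∧ c ≠ g ∧ d ≠ g ∧
      ((R b c ∧ R c d ∧ R d e ∧ R e g ∧ R g a) ∨
       (R a b ∧ R c d ∧ R d e ∧ R e g ∧ R g a) ∨
       (R a b ∧ R b c ∧ R d e ∧ R e g ∧ R g a) ∨
       (R a b ∧ R b c ∧ R c d ∧ R e g ∧ R g a) ∨
       (R a b ∧ R b c ∧ R c d ∧ R d e ∧ R g a) ∨
       (R a b ∧ R b c ∧ R c d ∧ R d e ∧ R e g))

lemma contains_imp_c6w {G : SimpleGraph (Finset (Fin 3))} (h : ContainsC6Minus 3 G) :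
    C6w G.Adj := by
  obtain ⟨f, finj, hadj, i, hG⟩ := h
  refine ⟨f 0, f 1, hadj 0, f 2, hadj 1, finj.ne (by decide), f 3, hadj 2,
    finj.ne (by decide), finj.ne (by decide), f 4, hadj 3, finj.ne (by decide),
    finj.ne (by decide), finj.ne (by decide), f 5, hadj 4, hadj 5, finj.ne (by decide),
    finj.ne (by decide), finj.ne (by decide), ?_⟩
  fin_cases i
  · exact Or.inl ⟨hG 1 (by decide), hG 2 (by decide), hG 3 (by decide), hG 4 (by decide),
      hG 5 (by decide)⟩
  · exact Or.inr <| Or.inl ⟨hG 0 (by decide), hG 2 (by decide), hG 3 (by decide),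
      hG 4 (by decide), hG 5 (by decide)⟩
  · exact Or.inr <| Or.inr <| Or.inl ⟨hG 0 (by decide), hG 1 (by decide), hG 3 (by decide),
      hG 4 (by decide), hG 5 (by decide)⟩
  · exact Or.inr <| Or.inr <| Or.inr <| Or.inl ⟨hG 0 (by decide), hG 1 (by decide),
      hG 2 (by decide), hG 4 (by decide), hG 5 (by decide)⟩
  · exact Or.inr <| Or.inr <| Or.inr <| Or.inr <| Or.inl ⟨hG 0 (by decide), hG 1 (by decide),
      hG 2 (by decide), hG 3 (by decide), hG 5 (by decide)⟩
  · exact Or.inr <| Or.inr <| Or.inr <| Or.inr <| Or.inr ⟨hG 0 (by decide), hG 1 (by decide),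
      hG 2 (by decide), hG 3 (by decide), hG 4 (by decide)⟩

/-- The example graph: all hypercube edges not in direction `0`. -/
def G0 : SimpleGraph (Finset (Fin 3)) where
  Adj A B := (hypercube 3).Adj A B ∧ ((0 : Fin 3) ∈ A ↔ (0 : Fin 3) ∈ B)
  symm := ⟨fun _ _ h => ⟨h.1.symm, h.2.symm⟩⟩
  loopless := ⟨fun A h => (hypercube 3).loopless.irrefl A h.1⟩

instance G0Dec : DecidableRel G0.Adj := fun A B =>
  inferInstanceAs (Decidable ((hypercube 3).Adj A B ∧ ((0 : Fin 3) ∈ A ↔ (0 : Fin 3) ∈ B)))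

lemma G0_no_c6w : ¬ C6w G0.Adj := by unfold C6w; decide

lemma G0_card : numEdges G0 = 8 := by
  have : numEdges G0 = G0.edgeFinset.card := by
    rw [numEdges, Nat.card_eq_fintype_card, SimpleGraph.edgeFinset_card]
  rw [this]
  decide

/-- `ex*(Q_3, C₆⁻) = 8`: the largest number of edges of a subgraph of `Q_3` containing no
`C₆⁻` equals 8. -/
theorem ex_C6minus_Q3 :
    (∃ G : SimpleGraph (Finset (Fin 3)), G ≤ hypercube 3 ∧ ¬ ContainsC6Minus 3 G ∧
      numEdges G = 8) ∧
    ∀ G : SimpleGraph (Finset (Fin 3)), G ≤ hypercube 3 → ¬ ContainsC6Minus 3 G →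
      numEdges G ≤ 8 := by
  constructor
  · exact ⟨G0, fun _ _ h => And.left h, fun h => G0_no_c6w (contains_imp_c6w h), G0_card⟩
  · intro G hle hnc
    classical
    set E := (hypercube 3).edgeFinset with hE
    set S : Finset (Sym2 (Finset (Fin 3))) := E.filter (fun e => e ∈ G.edgeSet) with hS
    have hsub : S ⊆ E := Finset.filter_subset _ _
    have hset : G.edgeSet = ↑S := by
      ext e
      simp only [hS, Finset.coe_filter, Set.mem_setOf_eq, hE, SimpleGraph.mem_edgeFinset]
      exact ⟨fun he => ⟨SimpleGraph.edgeSet_mono hle he, he⟩, fun he => he.2⟩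
    have hcard : numEdges G = S.card := by
      rw [numEdges, hset, Nat.card_coe_set_eq, Set.ncard_coe_finset]
    rw [hcard]
    by_contra hgt
    push_neg at hgt
    have h9 : 9 ≤ S.card := hgt
    have hEcard : E.card = 12 := by decide
    have hdiff : (E \ S).card ≤ 3 := by
      have := Finset.card_sdiff_of_subset hsub
      omega
    obtain ⟨T, hTsub, hTsub', hTcard⟩ :=
      Finset.exists_subsuperset_card_eq (Finset.sdiff_subset) hdiff (by omega : 3 ≤ E.card)
    obtain ⟨x, y, z, _, _, _, hTxyz⟩ := Finset.card_eq_three.mp hTcard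
    obtain ⟨t₁, ht₁⟩ := ed_surj x (hTsub' (by simp [hTxyz]))
    obtain ⟨t₂, ht₂⟩ := ed_surj y (hTsub' (by simp [hTxyz]))
    obtain ⟨t₃, ht₃⟩ := ed_surj z (hTsub' (by simp [hTxyz]))
    obtain ⟨k, i, hki⟩ := master t₁ t₂ t₃
    apply hnc
    refine ⟨cyc k, cyc_inj k, fun j => cyc_adj k j, i, fun j hj => ?_⟩
    have hmem : s(cyc k j, cyc k (j + 1)) ∈ E := SimpleGraph.mem_edgeFinset.mpr (cyc_adj k j)
    have hnT : s(cyc k j, cyc k (j + 1)) ∉ T := by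
      obtain ⟨hk1, hk2, hk3⟩ := hki j hj
      rw [hTxyz, ← ed_cyce k j]
      intro hmemT
      rcases Finset.mem_insert.mp hmemT with h | hmemT
      · exact hk1 (ed_inj (ht₁ ▸ h))
      rcases Finset.mem_insert.mp hmemT with h | hmemT
      · exact hk2 (ed_inj (ht₂ ▸ h))
      · exact hk3 (ed_inj (ht₃ ▸ Finset.mem_singleton.mp hmemT))
    have hmemS : s(cyc k j, cyc k (j + 1)) ∈ S := by
      by_contra hns
      exact hnT (hTsub (Finset.mem_sdiff.mpr ⟨hmem, hns⟩))
    have hmemE : s(cyc k j, cyc k (j + 1)) ∈ G.edgeSet := by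
      rw [hset]; exact_mod_cast hmemS
    exact (SimpleGraph.mem_edgeSet G).mp hmemE
end
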